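/- Let k ≥ 2 be an integer and q ∈ (0,1]. Then ∫₀¹ λ_q(t)dt = 1/(q·k). -/

import Mathlib

open Real

/-- `D_q(x) = 1 - (1-q)(1 - kx + (k-1)(1 - (1-x)^{k/(k-1)}))`. -/
noncomputable def Dq (k : ℕ) (q x : ℝ) : ℝ :=
  1 - (1 - q) * (1 - k * x + ((k : ℝ) - 1) * (1 - (1 - x) ^ ((k : ℝ) / ((k : ℝ) - 1))))

/-- The check-regular variable degree distribution
`λ_q(x) = (1 - (1-x)^{1/(k-1)}) / D_q(x)²`. -/
noncomputable def lamq (k : ℕ) (q x : ℝ) : ℝ :=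
  (1 - (1 - x) ^ (1 / ((k : ℝ) - 1))) / (Dq k q x) ^ 2

section aux

variable {k : ℕ} (hk : 2 ≤ k) {q : ℝ}

lemma km1_pos (hk : 2 ≤ k) : (0:ℝ) < (k:ℝ) - 1 := by
  have : (2:ℝ) ≤ (k:ℝ) := by exact_mod_cast hk
  linarith

lemma hp1 (hk : 2 ≤ k) : (1:ℝ) ≤ (k:ℝ) / ((k:ℝ) - 1) := by
  rw [le_div_iff₀ (km1_pos hk)]; linarith

/-- derivative of the inner rpow term -/
lemma hasDerivAt_rpow_term (hk : 2 ≤ k) (x : ℝ) :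
    HasDerivAt (fun x : ℝ => (1 - x) ^ ((k : ℝ) / ((k : ℝ) - 1)))
      (-(((k:ℝ) / ((k:ℝ) - 1)) * (1 - x) ^ (1 / ((k:ℝ) - 1)))) x := by
  have h1 : HasDerivAt (fun x : ℝ => 1 - x) (-1) x := by
    simpa using (hasDerivAt_id x).const_sub 1
  have h2 := (Real.hasDerivAt_rpow_const (x := 1 - x) (p := (k:ℝ) / ((k:ℝ) - 1))
    (Or.inr (hp1 hk))).comp x h1
  have hkm : ((k:ℝ) - 1) ≠ 0 := (km1_pos hk).ne'
  have he : (k:ℝ) / ((k:ℝ) - 1) - 1 = 1 / ((k:ℝ) - 1) := by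
    field_simp
    ring
  rw [he] at h2
  refine h2.congr_deriv ?_; ring

lemma hasDerivAt_Dq (hk : 2 ≤ k) (q x : ℝ) :
    HasDerivAt (Dq k q) ((1 - q) * k * (1 - (1 - x) ^ (1 / ((k:ℝ) - 1)))) x := by
  have h := (((hasDerivAt_id x).const_mul (k:ℝ)).const_sub 1 |>.add
    (((hasDerivAt_rpow_term hk x).const_sub 1).const_mul ((k:ℝ) - 1))).const_mul (1 - q)
  have h2 := h.const_sub 1
  have hkm : ((k:ℝ) - 1) ≠ 0 := (km1_pos hk).ne'
  refine h2.congr_deriv ?_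
  field_simp
  ring
end aux

section aux2
variable {k : ℕ}

lemma Dq_pos (hk : 2 ≤ k) {q : ℝ} (hq0 : 0 < q) (hq1 : q ≤ 1) {x : ℝ}
    (hx0 : 0 ≤ x) (hx1 : x ≤ 1) : 0 < Dq k q x := by
  have hkm := km1_pos hk
  have hB : 1 + ((k:ℝ) / ((k:ℝ) - 1)) * (-x) ≤ (1 + (-x)) ^ ((k:ℝ) / ((k:ℝ) - 1)) :=
    one_add_mul_self_le_rpow_one_add (by linarith) (hp1 hk)
  have hkp : ((k:ℝ) - 1) * ((k:ℝ) / ((k:ℝ) - 1)) = k := by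
    field_simp
  have h1x : (1 : ℝ) + (-x) = 1 - x := by ring
  rw [h1x] at hB
  set B := (1 - x) ^ ((k:ℝ) / ((k:ℝ) - 1)) with hBdef
  have hg : ((k:ℝ) - 1) * (1 - B) ≤ (k:ℝ) * x := by
    nlinarith [mul_le_mul_of_nonneg_left hB hkm.le]
  have hg1 : 1 - (k:ℝ) * x + ((k:ℝ) - 1) * (1 - B) ≤ 1 := by linarith
  have hmul := mul_le_mul_of_nonneg_left hg1 (sub_nonneg.mpr hq1)
  rw [Dq]
  linarith

lemma Dq_zero (k : ℕ) (q : ℝ) : Dq k q 0 = q := by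
  simp [Dq, Real.one_rpow]

lemma Dq_one (hk : 2 ≤ k) (q : ℝ) : Dq k q 1 = 1 := by
  have hkm := km1_pos hk
  have hp0 : ((k:ℝ) / ((k:ℝ) - 1)) ≠ 0 :=
    ne_of_gt (div_pos (by linarith) hkm)
  rw [Dq, show (1:ℝ) - 1 = 0 from by ring, Real.zero_rpow hp0]
  ring

lemma lamq_contOn (hk : 2 ≤ k) {q : ℝ} (hq0 : 0 < q) (hq1 : q ≤ 1) :
    ContinuousOn (lamq k q) (Set.Icc 0 1) := by
  have hkm := km1_pos hk
  have hc : (0:ℝ) ≤ 1 / ((k:ℝ) - 1) := by positivity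
  have hpn : (0:ℝ) ≤ (k:ℝ) / ((k:ℝ) - 1) := by positivity
  have hN : Continuous fun x : ℝ => 1 - (1 - x) ^ (1 / ((k:ℝ) - 1)) :=
    continuous_const.sub ((Real.continuous_rpow_const hc).comp (continuous_const.sub continuous_id))
  have hD : Continuous (Dq k q) := by
    unfold Dq
    fun_prop (disch := positivity)
  refine (hN.continuousOn).div ((hD.continuousOn).pow 2) ?_
  intro x hx
  exact pow_ne_zero 2 (Dq_pos hk hq0 hq1 hx.1 hx.2).ne'
end aux2

theorem stmt10 (k : ℕ) (hk : 2 ≤ k) (q : ℝ) (hq : q ∈ Set.Ioc (0 : ℝ) 1) :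
    (∫ t in (0 : ℝ)..1, lamq k q t) = 1 / (q * k) := by
  obtain ⟨hq0, hq1⟩ := hq
  have hkm := km1_pos hk
  have hk0 : (k:ℝ) ≠ 0 := by positivity
  have hint : IntervalIntegrable (lamq k q) MeasureTheory.volume 0 1 := by
    apply ContinuousOn.intervalIntegrable
    rw [Set.uIcc_of_le (by norm_num : (0:ℝ) ≤ 1)]
    exact lamq_contOn hk hq0 hq1
  rcases eq_or_lt_of_le hq1 with rfl | hqlt
  · -- q = 1
    have hD1 : ∀ x : ℝ, Dq k 1 x = 1 := by intro x; simp [Dq]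
    have key : ∀ x ∈ Set.uIcc (0:ℝ) 1,
        HasDerivAt (fun x : ℝ => x + (((k:ℝ) - 1) / k) * (1 - x) ^ ((k:ℝ)/((k:ℝ)-1)))
          (lamq k 1 x) x := by
      intro x _
      have h := (hasDerivAt_id x).add ((hasDerivAt_rpow_term hk x).const_mul (((k:ℝ) - 1) / k))
      refine h.congr_deriv ?_
      rw [lamq, hD1 x]
      field_simp
      ring
    rw [intervalIntegral.integral_eq_sub_of_hasDerivAt key hint]
    have hp0 : ((k:ℝ) / ((k:ℝ) - 1)) ≠ 0 := ne_of_gt (div_pos (by linarith) hkm)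
    rw [show (1:ℝ) - 1 = 0 from by ring, show (1:ℝ) - 0 = 1 from by ring,
      Real.zero_rpow hp0, Real.one_rpow]
    field_simp
    ring
  · -- q < 1
    have hq1' : (1:ℝ) - q ≠ 0 := by linarith
    have key : ∀ x ∈ Set.uIcc (0:ℝ) 1,
        HasDerivAt (fun x : ℝ => -((1 - q) * k)⁻¹ * (Dq k q x)⁻¹) (lamq k q x) x := by
      intro x hx
      rw [Set.uIcc_of_le (by norm_num : (0:ℝ) ≤ 1)] at hx
      have hDpos := Dq_pos hk hq0 hq1 hx.1 hx.2
      have h := ((hasDerivAt_Dq hk q x).inv hDpos.ne').const_mul (-((1 - q) * k)⁻¹)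
      refine h.congr_deriv ?_
      rw [lamq]
      field_simp
    rw [intervalIntegral.integral_eq_sub_of_hasDerivAt key hint, Dq_zero, Dq_one hk]
    field_simp
    ring
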